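/- Let P be a polynomial function on Λ × ℤ_{>0} (λ, level k) that is anti-invariant, at each fixed level k, under both subgroups Σ_r^+ and Σ_r^- of the affine Weyl group of SU(r) acting at level k (defined as the stabilizers of the points θ₁[k] − v_det and θ_{−1}[k] − v_det respectively). If r > 2 then Σ_r^+ and Σ_r^- generate the full affine Weyl group Σ_r ⋉ (k+r)Λ, and consequently P ≡ 0. -/

import Mathlib

/-- Half-sum of positive roots: `ρ = (r−1, r−3, ..., 1−r)/2` (0-indexed: `ρ i = (r-1-2i)/2`). -/
noncomputable def rhoVec (r : ℕ) : Fin r → ℝ := fun i => ((r : ℝ) - 1 - 2 * (i : ℝ)) / 2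

/-- The affine Weyl action `λ ↦ σ(λ+ρ+v) − ρ − v + (k+r)γ` at level `k`,
where `σ` permutes coordinates and `γ` is a lattice translation. -/
def affAct (r k : ℕ) (ρ v : Fin r → ℝ) (σ : Equiv.Perm (Fin r)) (γ : Fin r → ℤ) :
    Function.End (Fin r → ℝ) :=
  fun x i => (x (σ.symm i) + ρ (σ.symm i) + v (σ.symm i)) - ρ i - v i + ((k : ℝ) + r) * γ i

/-- The special point `θ₁[k] = (k+r)(1,...,1)/r − (k+r)x_r − ρ`. -/
noncomputable def thetaPlus (r k : ℕ) : Fin r → ℝ :=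
  fun i => ((k : ℝ) + r) / r - (if (i : ℕ) = r - 1 then (k : ℝ) + r else 0) - rhoVec r i

/-- The special point `θ_{−1}[k] = −(k+r)(1,...,1)/r + (k+r)x₁ − ρ`. -/
noncomputable def thetaMinus (r k : ℕ) : Fin r → ℝ :=
  fun i => -(((k : ℝ) + r) / r) + (if (i : ℕ) = 0 then (k : ℝ) + r else 0) - rhoVec r i

/-- The stabilizer of the point `θ` inside the affine Weyl group at level `k`, as a set
of self-maps of `ℝ^r`. -/
def stabSet (r k : ℕ) (v θ : Fin r → ℝ) : Set (Function.End (Fin r → ℝ)) :=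
  {f | ∃ σ : Equiv.Perm (Fin r), ∃ γ : Fin r → ℤ, (∑ i, γ i) = 0 ∧
    f = affAct r k (rhoVec r) v σ γ ∧ affAct r k (rhoVec r) v σ γ θ = θ}

namespace Stmt5Aux

open Finset

lemma affAct_mul (r k : ℕ) (v : Fin r → ℝ) (σ τ : Equiv.Perm (Fin r)) (γ δ : Fin r → ℤ) :
    affAct r k (rhoVec r) v σ γ * affAct r k (rhoVec r) v τ δ
      = affAct r k (rhoVec r) v (σ * τ) (γ + fun i => δ (σ.symm i)) := by
  funext x i
  show affAct r k (rhoVec r) v σ γ (affAct r k (rhoVec r) v τ δ x) i = _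
  simp only [affAct, Equiv.Perm.mul_def, Equiv.symm_trans_apply, Pi.add_apply]
  push_cast
  ring

lemma affAct_zero_one (r k : ℕ) (v : Fin r → ℝ) :
    affAct r k (rhoVec r) v 1 0 = 1 := by
  funext x i
  simp [affAct, Function.End.one_def, Equiv.Perm.one_symm, Equiv.Perm.one_apply]
  ring

lemma affAct_one_apply (r k : ℕ) (v : Fin r → ℝ) (γ : Fin r → ℤ) (x : Fin r → ℝ) (i : Fin r) :
    affAct r k (rhoVec r) v 1 γ x i = x i + ((k : ℝ) + r) * γ i := by
  simp only [affAct, Equiv.Perm.one_def, Equiv.refl_symm, Equiv.refl_apply]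
  ring

lemma affAct_perm_eq (r k : ℕ) (v : Fin r → ℝ) (σ τ : Equiv.Perm (Fin r)) (γ δ : Fin r → ℤ)
    (h : affAct r k (rhoVec r) v σ γ = affAct r k (rhoVec r) v τ δ) : σ = τ := by
  have key : ∀ i, σ.symm i = τ.symm i := by
    intro i
    set f : Fin r → ℝ := fun j => if j = τ.symm i then 1 else 0 with hf
    have h1 := congrFun (congrFun h f) i
    have h2 := congrFun (congrFun h (0 : Fin r → ℝ)) i
    simp only [affAct, Pi.zero_apply] at h1 h2
    have h3 : f (σ.symm i) = f (τ.symm i) := by nlinarith [h1, h2]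
    simp only [hf, if_pos rfl] at h3
    by_contra hne
    rw [if_neg hne] at h3
    norm_num at h3
  have h4 : σ.symm = τ.symm := Equiv.ext key
  have := congrArg Equiv.symm h4
  simpa using this

def aplus (r : ℕ) (hr : 0 < r) (σ : Equiv.Perm (Fin r)) : Fin r → ℤ :=
  fun i => (if i = σ ⟨r - 1, by omega⟩ then 1 else 0) - (if i = ⟨r - 1, by omega⟩ then 1 else 0)

def bminus (r : ℕ) (hr : 0 < r) (σ : Equiv.Perm (Fin r)) : Fin r → ℤ :=
  fun i => (if i = ⟨0, hr⟩ then 1 else 0) - (if i = σ ⟨0, hr⟩ then 1 else 0)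

lemma aplus_sum (r : ℕ) (hr : 0 < r) (σ : Equiv.Perm (Fin r)) : ∑ i, aplus r hr σ i = 0 := by
  simp [aplus, Finset.sum_sub_distrib, Finset.sum_ite_eq']

lemma bminus_sum (r : ℕ) (hr : 0 < r) (σ : Equiv.Perm (Fin r)) : ∑ i, bminus r hr σ i = 0 := by
  simp [bminus, Finset.sum_sub_distrib, Finset.sum_ite_eq']

lemma gplus_fix (r k : ℕ) (v : Fin r → ℝ) (hr : 0 < r) (σ : Equiv.Perm (Fin r)) :
    affAct r k (rhoVec r) v σ (aplus r hr σ) (thetaPlus r k - v) = thetaPlus r k - v := by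
  funext i
  have hlast : ∀ j : Fin r, ((j : ℕ) = r - 1) ↔ j = ⟨r - 1, by omega⟩ := fun j => by
    rw [Fin.ext_iff]
  simp only [affAct, Pi.sub_apply, thetaPlus, aplus, hlast, Equiv.symm_apply_eq]
  split_ifs <;> push_cast <;> ring

lemma gminus_fix (r k : ℕ) (v : Fin r → ℝ) (hr : 0 < r) (σ : Equiv.Perm (Fin r)) :
    affAct r k (rhoVec r) v σ (bminus r hr σ) (thetaMinus r k - v) = thetaMinus r k - v := by
  funext i
  have hz : ∀ j : Fin r, ((j : ℕ) = 0) ↔ j = ⟨0, hr⟩ := fun j => by rw [Fin.ext_iff]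
  simp only [affAct, Pi.sub_apply, thetaMinus, bminus, hz, Equiv.symm_apply_eq]
  split_ifs <;> push_cast <;> ring

lemma exists_perm_pair {r : ℕ} (x₁ x₂ y₁ y₂ : Fin r) (hx : x₁ ≠ x₂) (hy : y₁ ≠ y₂) :
    ∃ σ : Equiv.Perm (Fin r), σ x₁ = y₁ ∧ σ x₂ = y₂ := by
  refine ⟨(Equiv.swap ((Equiv.swap x₁ y₁) x₂) y₂) * (Equiv.swap x₁ y₁), ?_, ?_⟩
  · have h1 : (Equiv.swap x₁ y₁) x₁ = y₁ := Equiv.swap_apply_left _ _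
    have hz : y₁ ≠ (Equiv.swap x₁ y₁) x₂ := by
      intro h
      exact hx ((Equiv.swap x₁ y₁).injective (h1.trans h))
    simp only [Equiv.Perm.mul_apply, h1]
    exact Equiv.swap_apply_of_ne_of_ne hz hy
  · simp only [Equiv.Perm.mul_apply]
    exact Equiv.swap_apply_left _ _

lemma exists_third {r : ℕ} (hr : 2 < r) (a b : Fin r) : ∃ c : Fin r, c ≠ a ∧ c ≠ b := by
  have h : (({a, b} : Finset (Fin r))ᶜ).Nonempty := by
    apply Finset.card_pos.mp
    rw [Finset.card_compl]
    have h2 : ({a, b} : Finset (Fin r)).card ≤ 2 := by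
      have := Finset.card_insert_le a ({b} : Finset (Fin r))
      simpa using this
    have h3 : Fintype.card (Fin r) = r := Fintype.card_fin r
    omega
  obtain ⟨c, hc⟩ := h
  simp only [Finset.mem_compl, Finset.mem_insert, Finset.mem_singleton, not_or] at hc
  exact ⟨c, hc.1, hc.2⟩

def MM (r k : ℕ) (v : Fin r → ℝ) : Submonoid (Function.End (Fin r → ℝ)) :=
  Submonoid.closure (stabSet r k v (thetaPlus r k - v) ∪ stabSet r k v (thetaMinus r k - v))

lemma gplus_mem (r k : ℕ) (v : Fin r → ℝ) (hr : 0 < r) (σ : Equiv.Perm (Fin r)) :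
    affAct r k (rhoVec r) v σ (aplus r hr σ) ∈ MM r k v :=
  Submonoid.subset_closure (Or.inl ⟨σ, _, aplus_sum r hr σ, rfl, gplus_fix r k v hr σ⟩)

lemma gminus_mem (r k : ℕ) (v : Fin r → ℝ) (hr : 0 < r) (σ : Equiv.Perm (Fin r)) :
    affAct r k (rhoVec r) v σ (bminus r hr σ) ∈ MM r k v :=
  Submonoid.subset_closure (Or.inr ⟨σ, _, bminus_sum r hr σ, rfl, gminus_fix r k v hr σ⟩)

lemma T_eq (r k : ℕ) (v : Fin r → ℝ) (hr : 0 < r) (σ : Equiv.Perm (Fin r)) :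
    affAct r k (rhoVec r) v σ (aplus r hr σ) * affAct r k (rhoVec r) v σ⁻¹ (bminus r hr σ⁻¹)
      = affAct r k (rhoVec r) v 1 (fun i =>
          (if i = σ ⟨r - 1, by omega⟩ then 1 else 0) + (if i = σ ⟨0, hr⟩ then 1 else 0)
          - (if i = ⟨r - 1, by omega⟩ then 1 else 0) - (if i = ⟨0, hr⟩ then 1 else 0)) := by
  rw [affAct_mul, mul_inv_cancel]
  apply congrArg
  funext i
  simp only [aplus, bminus, Pi.add_apply, Equiv.Perm.inv_def, Equiv.symm_apply_eq,
    Equiv.apply_symm_apply]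
  split_ifs <;> ring

lemma U_eq (r k : ℕ) (v : Fin r → ℝ) (hr : 0 < r) (σ : Equiv.Perm (Fin r)) :
    affAct r k (rhoVec r) v σ (bminus r hr σ) * affAct r k (rhoVec r) v σ⁻¹ (aplus r hr σ⁻¹)
      = affAct r k (rhoVec r) v 1 (fun i =>
          (if i = ⟨r - 1, by omega⟩ then 1 else 0) + (if i = ⟨0, hr⟩ then 1 else 0)
          - (if i = σ ⟨r - 1, by omega⟩ then 1 else 0) - (if i = σ ⟨0, hr⟩ then 1 else 0)) := by
  rw [affAct_mul, mul_inv_cancel]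
  apply congrArg
  funext i
  simp only [aplus, bminus, Pi.add_apply, Equiv.Perm.inv_def, Equiv.symm_apply_eq,
    Equiv.apply_symm_apply]
  split_ifs <;> ring

lemma E_mem (r k : ℕ) (v : Fin r → ℝ) (hr2 : 2 < r) (a b : Fin r) :
    affAct r k (rhoVec r) v 1
      (fun i => (if i = a then 1 else 0) - (if i = b then 1 else 0)) ∈ MM r k v := by
  have hr : 0 < r := by omega
  by_cases hab : a = b
  · subst hab
    have h0 : (fun i : Fin r => (if i = a then (1:ℤ) else 0) - (if i = a then 1 else 0))
        = (0 : Fin r → ℤ) := by funext i; simp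
    rw [h0, affAct_zero_one]
    exact (MM r k v).one_mem
  · obtain ⟨c, hca, hcb⟩ := exists_third hr2 a b
    have hli : (⟨r - 1, by omega⟩ : Fin r) ≠ ⟨0, hr⟩ := by
      simp only [ne_eq, Fin.mk.injEq]; omega
    obtain ⟨σ₁, h1l, h1z⟩ := exists_perm_pair (⟨r-1, by omega⟩ : Fin r) ⟨0, hr⟩ a c hli (Ne.symm hca)
    obtain ⟨σ₂, h2l, h2z⟩ := exists_perm_pair (⟨r-1, by omega⟩ : Fin r) ⟨0, hr⟩ b c hli (Ne.symm hcb)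
    have m1 := (MM r k v).mul_mem
      ((MM r k v).mul_mem (gplus_mem r k v hr σ₁) (gminus_mem r k v hr σ₁⁻¹))
      ((MM r k v).mul_mem (gminus_mem r k v hr σ₂) (gplus_mem r k v hr σ₂⁻¹))
    rw [T_eq r k v hr σ₁, U_eq r k v hr σ₂, affAct_mul, one_mul] at m1
    convert m1 using 2
    funext i
    simp only [Pi.add_apply, Equiv.Perm.one_symm, Equiv.Perm.one_apply, h1l, h1z,
      h2l, h2z]
    split_ifs <;> simp_all

lemma trans_mem (r k : ℕ) (v : Fin r → ℝ) (hr2 : 2 < r) :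
    ∀ N : ℕ, ∀ γ : Fin r → ℤ, (∑ i, γ i) = 0 → (∑ i, (γ i).natAbs) ≤ N →
      affAct r k (rhoVec r) v 1 γ ∈ MM r k v := by
  intro N
  induction N with
  | zero =>
    intro γ hsum hN
    have hγ : γ = 0 := by
      funext i
      have h1 : ∑ j, (γ j).natAbs = 0 := Nat.le_zero.mp hN
      have h2 := Finset.sum_eq_zero_iff.mp h1 i (Finset.mem_univ i)
      simpa [Int.natAbs_eq_zero] using h2
    rw [hγ, affAct_zero_one]
    exact (MM r k v).one_mem
  | succ n ih =>
    intro γ hsum hN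
    by_cases h0 : γ = 0
    · rw [h0, affAct_zero_one]; exact (MM r k v).one_mem
    · have ha : ∃ a, 0 < γ a := by
        by_contra h
        push_neg at h
        have := (Finset.sum_eq_zero_iff_of_nonpos (fun i _ => h i)).mp hsum
        exact h0 (funext fun i => this i (Finset.mem_univ i))
      have hb : ∃ b, γ b < 0 := by
        by_contra h
        push_neg at h
        have := (Finset.sum_eq_zero_iff_of_nonneg (fun i _ => h i)).mp hsum
        exact h0 (funext fun i => this i (Finset.mem_univ i))
      obtain ⟨a, hapos⟩ := ha
      obtain ⟨b, hbneg⟩ := hb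
      have hab : a ≠ b := fun h => by rw [h] at hapos; omega
      set γ' : Fin r → ℤ :=
        fun i => γ i - ((if i = a then 1 else 0) - (if i = b then 1 else 0)) with hγ'
      have hsum' : ∑ i, γ' i = 0 := by
        simp [hγ', Finset.sum_sub_distrib, hsum, Finset.sum_ite_eq']
      have hdec : ∑ i, (γ' i).natAbs ≤ n := by
        have key : ∀ f : Fin r → ℕ,
            ∑ i, f i = f a + (f b + ∑ i ∈ (Finset.univ.erase a).erase b, f i) := by
          intro f
          rw [Finset.add_sum_erase _ f (Finset.mem_erase.mpr ⟨Ne.symm hab, Finset.mem_univ b⟩),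
            Finset.add_sum_erase _ f (Finset.mem_univ a)]
        have k1 := key (fun i => (γ i).natAbs)
        have k2 := key (fun i => (γ' i).natAbs)
        have hrest : ∑ i ∈ (Finset.univ.erase a).erase b, (γ' i).natAbs
            = ∑ i ∈ (Finset.univ.erase a).erase b, (γ i).natAbs := by
          apply Finset.sum_congr rfl
          intro i hi
          have hib : i ≠ b := (Finset.mem_erase.mp hi).1
          have hia : i ≠ a := (Finset.mem_erase.mp (Finset.mem_erase.mp hi).2).1
          simp [hγ', hia, hib]
        have ea : γ' a = γ a - 1 := by simp [hγ', hab]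
        have eb : γ' b = γ b + 1 := by simp [hγ', Ne.symm hab]
        rw [hrest, ea, eb] at k2
        omega
      have hmem' := ih γ' hsum' hdec
      have := (MM r k v).mul_mem (E_mem r k v hr2 a b) hmem'
      rw [affAct_mul, one_mul] at this
      convert this using 2
      funext i
      simp only [hγ', Pi.add_apply, Equiv.Perm.one_def, Equiv.refl_symm, Equiv.refl_apply]
      ring

lemma full_mem (r k : ℕ) (v : Fin r → ℝ) (hr2 : 2 < r) (σ : Equiv.Perm (Fin r))
    (γ : Fin r → ℤ) (hγ : ∑ i, γ i = 0) :
    affAct r k (rhoVec r) v σ γ ∈ MM r k v := by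
  have hr : 0 < r := by omega
  have hδ : ∑ i, (γ i - aplus r hr σ i) = 0 := by
    rw [Finset.sum_sub_distrib, hγ, aplus_sum r hr σ]
    norm_num
  have := (MM r k v).mul_mem
    (trans_mem r k v hr2 (∑ i, ((γ i - aplus r hr σ i)).natAbs)
      (fun i => γ i - aplus r hr σ i) hδ le_rfl)
    (gplus_mem r k v hr σ)
  rw [affAct_mul, one_mul] at this
  convert this using 2
  funext i
  simp only [Pi.add_apply, Equiv.Perm.one_def, Equiv.refl_symm, Equiv.refl_apply]
  ring

end Stmt5Aux

namespace Stmt5Aux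

lemma eval_aeval_poly {n : Type*} [Fintype n] [DecidableEq n] (p : MvPolynomial n ℝ)
    (f : n → Polynomial ℝ) (t : ℝ) :
    Polynomial.eval t (MvPolynomial.aeval f p)
      = MvPolynomial.eval (fun j => Polynomial.eval t (f j)) p := by
  have h := MvPolynomial.eval₂_comp_left (Polynomial.evalRingHom t)
    (algebraMap ℝ (Polynomial ℝ)) f p
  rw [MvPolynomial.aeval_def]
  simp only [Polynomial.coe_evalRingHom] at h
  rw [h]
  have h2 : MvPolynomial.eval (fun j => Polynomial.eval t (f j)) p
      = MvPolynomial.eval₂ (RingHom.id ℝ) (fun j => Polynomial.eval t (f j)) p := rfl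
  rw [h2]
  congr 1
  · ext a : 1; simp

end Stmt5Aux

set_option maxHeartbeats 1600000 in
/-- let `P` be a polynomial function on `Λ × ℤ_{>0}` which at each fixed
level `k` is anti-invariant under both stabilizer subgroups `Σ_r^± ⊆` affine Weyl group
(the stabilizers of `θ₁[k] − v_det` and `θ_{−1}[k] − v_det`).  If `r > 2` then `Σ_r^+`
and `Σ_r^-` generate the full affine Weyl group `Σ_r ⋉ (k+r)Λ` (every affine Weyl
element is a composition of stabilizer elements), and consequently `P ≡ 0`. -/
theorem stmt5 (r : ℕ) (hr : 2 < r) (v : Fin r → ℝ) (hv : ∑ i, v i = 0)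
    (P : ℕ → (Fin r → ℝ) → ℝ)
    (hPpoly : ∀ k, 0 < k → ∃ p : MvPolynomial (Fin r) ℝ, ∀ x, P k x = MvPolynomial.eval x p)
    (hplus : ∀ k, 0 < k → ∀ σ : Equiv.Perm (Fin r), ∀ γ : Fin r → ℤ, (∑ i, γ i) = 0 →
      affAct r k (rhoVec r) v σ γ (thetaPlus r k - v) = thetaPlus r k - v →
      ∀ x, P k (affAct r k (rhoVec r) v σ γ x) = ((Equiv.Perm.sign σ : ℤ) : ℝ) * P k x)
    (hminus : ∀ k, 0 < k → ∀ σ : Equiv.Perm (Fin r), ∀ γ : Fin r → ℤ, (∑ i, γ i) = 0 →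
      affAct r k (rhoVec r) v σ γ (thetaMinus r k - v) = thetaMinus r k - v →
      ∀ x, P k (affAct r k (rhoVec r) v σ γ x) = ((Equiv.Perm.sign σ : ℤ) : ℝ) * P k x) :
    (∀ k, 0 < k → ∀ σ : Equiv.Perm (Fin r), ∀ γ : Fin r → ℤ, (∑ i, γ i) = 0 →
      affAct r k (rhoVec r) v σ γ ∈
        Submonoid.closure (stabSet r k v (thetaPlus r k - v) ∪
          stabSet r k v (thetaMinus r k - v))) ∧
    (∀ k, 0 < k → ∀ x, P k x = 0) := by
  have hr0 : 0 < r := by omega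
  have hmain : ∀ k, 0 < k → ∀ σ : Equiv.Perm (Fin r), ∀ γ : Fin r → ℤ, (∑ i, γ i) = 0 →
      affAct r k (rhoVec r) v σ γ ∈
        Submonoid.closure (stabSet r k v (thetaPlus r k - v) ∪
          stabSet r k v (thetaMinus r k - v)) := by
    intro k hk σ γ hγ
    exact Stmt5Aux.full_mem r k v hr σ γ hγ
  refine ⟨hmain, ?_⟩
  intro k hk
  -- anti-invariance extends to products
  have anti : ∀ f ∈ Submonoid.closure (stabSet r k v (thetaPlus r k - v) ∪
      stabSet r k v (thetaMinus r k - v)), ∃ σ : Equiv.Perm (Fin r), ∃ γ : Fin r → ℤ,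
      f = affAct r k (rhoVec r) v σ γ ∧
      ∀ y, P k (f y) = ((Equiv.Perm.sign σ : ℤ) : ℝ) * P k y := by
    intro f hf
    refine Submonoid.closure_induction ?_ ?_ ?_ hf
    · rintro f (⟨σ, γ, hs, rfl, hfix⟩ | ⟨σ, γ, hs, rfl, hfix⟩)
      · exact ⟨σ, γ, rfl, hplus k hk σ γ hs hfix⟩
      · exact ⟨σ, γ, rfl, hminus k hk σ γ hs hfix⟩
    · refine ⟨1, 0, (Stmt5Aux.affAct_zero_one r k v).symm, fun y => ?_⟩
      simp [Function.End.one_def]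
    · rintro f g _ _ ⟨σ, γ, rfl, hPf⟩ ⟨τ, δ, rfl, hPg⟩
      refine ⟨σ * τ, γ + fun i => δ (σ.symm i), (Stmt5Aux.affAct_mul r k v σ τ γ δ), fun y => ?_⟩
      have hcomp : (affAct r k (rhoVec r) v σ γ * affAct r k (rhoVec r) v τ δ) y
          = affAct r k (rhoVec r) v σ γ (affAct r k (rhoVec r) v τ δ y) := rfl
      rw [hcomp, hPf, hPg, Equiv.Perm.sign_mul]
      push_cast
      ring
  -- translation invariance
  have tinv : ∀ γ : Fin r → ℤ, (∑ i, γ i) = 0 →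
      ∀ y, P k (affAct r k (rhoVec r) v 1 γ y) = P k y := by
    intro γ hγ y
    obtain ⟨σ', γ', heq, hP⟩ := anti _ (hmain k hk 1 γ hγ)
    have hσ : (1 : Equiv.Perm (Fin r)) = σ' := Stmt5Aux.affAct_perm_eq r k v 1 σ' γ γ' heq
    have := hP y
    rw [← hσ] at this
    simpa using this
  -- the reflection
  set a0 : Fin r := ⟨0, by omega⟩ with ha0
  set a1 : Fin r := ⟨1, by omega⟩ with ha1
  have ha01 : a0 ≠ a1 := by simp [ha0, ha1, Fin.ext_iff]
  set s : Equiv.Perm (Fin r) := Equiv.swap a0 a1 with hs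
  have hsl : s (⟨r - 1, by omega⟩ : Fin r) = ⟨r - 1, by omega⟩ := by
    apply Equiv.swap_apply_of_ne_of_ne <;> · simp [ha0, ha1, Fin.ext_iff]; omega
  have haplus0 : Stmt5Aux.aplus r hr0 s = 0 := by
    funext i
    simp [Stmt5Aux.aplus, hsl]
  have hswinv : ∀ y, P k (affAct r k (rhoVec r) v s 0 y) = - P k y := by
    intro y
    have hfix : affAct r k (rhoVec r) v s 0 (thetaPlus r k - v) = thetaPlus r k - v := by
      rw [← haplus0]
      exact Stmt5Aux.gplus_fix r k v hr0 s
    have h := hplus k hk s 0 (by simp) hfix y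
    rw [h, Equiv.Perm.sign_swap ha01]
    push_cast
    ring
  -- vanishing on the family of hyperplanes
  have hvan : ∀ (y : Fin r → ℝ) (n : ℕ),
      y a0 = y a1 + ((rhoVec r a1 + v a1) - (rhoVec r a0 + v a0)) + ((k : ℝ) + r) * n →
      P k y = 0 := by
    intro y n hy
    set γn : Fin r → ℤ := fun i => (n : ℤ) * ((if i = a0 then 1 else 0) - (if i = a1 then 1 else 0))
      with hγn
    have hγnsum : ∑ i, γn i = 0 := by
      simp only [hγn]
      rw [← Finset.mul_sum]
      simp [Finset.sum_sub_distrib, Finset.sum_ite_eq']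
    have hfix : affAct r k (rhoVec r) v 1 γn (affAct r k (rhoVec r) v s 0 y) = y := by
      funext i
      rw [Stmt5Aux.affAct_one_apply]
      simp only [affAct, hs, Equiv.symm_swap, Pi.zero_apply, Int.cast_zero, mul_zero, add_zero]
      by_cases hi0 : i = a0
      · subst hi0
        simp only [Equiv.swap_apply_left, hγn, if_pos rfl, if_neg ha01]
        rw [hy]
        push_cast
        ring
      · by_cases hi1 : i = a1
        · subst hi1
          simp only [Equiv.swap_apply_right, hγn, if_neg (Ne.symm ha01), if_pos rfl]
          rw [hy]
          push_cast
          ring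
        · rw [Equiv.swap_apply_of_ne_of_ne hi0 hi1]
          simp only [hγn, if_neg hi0, if_neg hi1]
          push_cast
          ring
    have hchain : P k y = - P k y := by
      calc P k y = P k (affAct r k (rhoVec r) v 1 γn (affAct r k (rhoVec r) v s 0 y)) := by
            rw [hfix]
        _ = P k (affAct r k (rhoVec r) v s 0 y) := tinv γn hγnsum _
        _ = - P k y := hswinv y
    linarith
  -- polynomial argument
  intro x
  obtain ⟨p, hp⟩ := hPpoly k hk
  set c : ℝ := (rhoVec r a1 + v a1) - (rhoVec r a0 + v a0) with hc
  set q : Polynomial ℝ := MvPolynomial.aeval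
    (fun j => if j = a0 then Polynomial.X else Polynomial.C (x j)) p with hqdef
  have hq : ∀ t, q.eval t = P k (Function.update x a0 t) := by
    intro t
    rw [hqdef, Stmt5Aux.eval_aeval_poly, hp]
    have harg : (fun j => Polynomial.eval t (if j = a0 then Polynomial.X else Polynomial.C (x j)))
        = Function.update x a0 t := by
      funext j
      rw [Function.update_apply]
      by_cases hj : j = a0 <;> simp [hj]
    rw [harg]
  have hmpos : (0 : ℝ) < (k : ℝ) + r := by positivity
  have hroots : ∀ n : ℕ, q.IsRoot (x a1 + c + ((k : ℝ) + r) * n) := by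
    intro n
    rw [Polynomial.IsRoot, hq]
    apply hvan _ n
    rw [Function.update_self, Function.update_of_ne (Ne.symm ha01)]
  have hq0 : q = 0 := by
    apply Polynomial.eq_zero_of_infinite_isRoot
    refine Set.infinite_of_injective_forall_mem
      (f := fun n : ℕ => x a1 + c + ((k : ℝ) + r) * n) ?_ (fun n => hroots n)
    intro n1 n2 h
    simp only at h
    have h2 : ((k : ℝ) + r) * n1 = ((k : ℝ) + r) * n2 := by linarith
    have h3 : (n1 : ℝ) = n2 := mul_left_cancel₀ (ne_of_gt hmpos) h2
    exact_mod_cast h3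
  have := hq (x a0)
  rw [hq0, Function.update_eq_self] at this
  simpa using this.symm
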